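/- Let ψ₁ ∈ L²(0,T) be deterministic with ψ₁ ∉ L^p(0, T-δ) for every p > 2 and some fixed δ ∈ (0,T). Then the process Y(t) = ∫_0^t ψ₁(s)dW(s) + ψ₁(t)(T-t) satisfies ∫_0^T E|Y(t)|^p dt = ∞ for every p > 2, even though ψ(t) := ∫_0^T ψ₁(s)dW(s) satisfies E∫_0^T |ψ(t)|^p dt < ∞ for all p > 1. -/

import Mathlib

open MeasureTheory Real Set ProbabilityTheory
open scoped NNReal ENNReal

private lemma integrable_abs_rpow_mul_exp_neg_mul_sq {b : ℝ} (hb : 0 < b) {s : ℝ} (hs : -1 < s) :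
    Integrable fun x : ℝ => |x| ^ s * Real.exp (-b * x ^ 2) := by
  have h : IntegrableOn (fun x : ℝ => |x| ^ s * Real.exp (-b * x ^ 2)) (Set.Ioi 0) := by
    refine (integrableOn_rpow_mul_exp_neg_mul_sq hb hs).congr_fun ?_ measurableSet_Ioi
    intro x hx
    simp only [abs_of_pos (Set.mem_Ioi.mp hx)]
  rw [← integrableOn_univ, ← Set.Iio_union_Ici (a := (0:ℝ)), integrableOn_union,
    integrableOn_Ici_iff_integrableOn_Ioi]
  refine ⟨?_, h⟩
  rw [← (Measure.measurePreserving_neg (volume : Measure ℝ)).integrableOn_comp_preimage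
      (Homeomorph.neg ℝ).measurableEmbedding]
  simpa only [Function.comp_def, neg_sq, abs_neg, Set.neg_preimage, Set.neg_Iio, neg_neg,
    neg_zero] using h

private lemma measurable_absrpow (q : ℝ) :
    Measurable fun x : ℝ => ENNReal.ofReal (|x| ^ q) :=
  by fun_prop

private lemma gauss_moment_lt_top (v : ℝ≥0) {q : ℝ} (hq : 0 < q) :
    ∫⁻ x, ENNReal.ofReal (|x| ^ q) ∂(gaussianReal 0 v) < ⊤ := by
  by_cases hv : v = 0
  · subst hv
    rw [gaussianReal_zero_var, lintegral_dirac' _ (measurable_absrpow q)]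
    simp [Real.zero_rpow hq.ne']
  · rw [gaussianReal_of_var_ne_zero _ hv,
      lintegral_withDensity_eq_lintegral_mul _ (measurable_gaussianPDF _ _) (measurable_absrpow q)]
    have hvpos : (0:ℝ) < (v:ℝ) := by positivity
    have hb : (0:ℝ) < (2*(v:ℝ))⁻¹ := by positivity
    set c : ℝ := (√(2 * π * (v:ℝ)))⁻¹ with hc
    have hc0 : (0:ℝ) ≤ c := by positivity
    have key : Integrable (fun x : ℝ => |x| ^ q * Real.exp (-(2*(v:ℝ))⁻¹ * x ^ 2) * c) :=
      (integrable_abs_rpow_mul_exp_neg_mul_sq hb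
        (lt_of_lt_of_le neg_one_lt_zero hq.le)).mul_const c
    have heq : ∀ x : ℝ, (gaussianPDF 0 v * fun x => ENNReal.ofReal (|x| ^ q)) x
        = ENNReal.ofReal (|x| ^ q * Real.exp (-(2*(v:ℝ))⁻¹ * x ^ 2) * c) := by
      intro x
      simp only [Pi.mul_apply, gaussianPDF, ← ENNReal.ofReal_mul (gaussianPDFReal_nonneg 0 v x)]
      congr 1
      rw [gaussianPDFReal]
      have harg : -(x - 0) ^ 2 / (2 * (v:ℝ)) = -(2*(v:ℝ))⁻¹ * x ^ 2 := by
        field_simp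
        ring
      rw [harg]
      ring
    rw [lintegral_congr heq]
    exact key.lintegral_lt_top

private lemma gauss_moment_scale (v : ℝ≥0) {q : ℝ} (hq : 0 ≤ q) :
    ∫⁻ x, ENNReal.ofReal (|x| ^ q) ∂(gaussianReal 0 v)
      = ENNReal.ofReal (√(v:ℝ) ^ q) * ∫⁻ x, ENNReal.ofReal (|x| ^ q) ∂(gaussianReal 0 1) := by
  have hc0 : (0:ℝ) ≤ √(v:ℝ) := Real.sqrt_nonneg _
  have hmap : Measure.map (fun x : ℝ => √(v:ℝ) * x) (gaussianReal 0 1) = gaussianReal 0 v := by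
    have h := gaussianReal_map_const_mul (μ := 0) (v := 1) (√(v:ℝ))
    rw [mul_zero] at h
    convert h using 3
    ext
    simp [Real.sq_sqrt v.coe_nonneg]
  calc ∫⁻ x, ENNReal.ofReal (|x| ^ q) ∂(gaussianReal 0 v)
      = ∫⁻ x, ENNReal.ofReal (|√(v:ℝ) * x| ^ q) ∂(gaussianReal 0 1) := by
        rw [← hmap, lintegral_map (measurable_absrpow q) (measurable_const_mul _)]
    _ = ∫⁻ x, ENNReal.ofReal (√(v:ℝ) ^ q) * ENNReal.ofReal (|x| ^ q) ∂(gaussianReal 0 1) := by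
        refine lintegral_congr fun x => ?_
        rw [abs_mul, abs_of_nonneg hc0, Real.mul_rpow hc0 (abs_nonneg _),
          ENNReal.ofReal_mul (Real.rpow_nonneg hc0 q)]
    _ = _ := lintegral_const_mul' _ _ ENNReal.ofReal_ne_top

private lemma add_rpow_le_two_rpow (a b : ℝ≥0∞) {q : ℝ} (hq : 0 ≤ q) :
    (a + b) ^ q ≤ 2 ^ q * (a ^ q + b ^ q) := by
  have h1 : a + b ≤ 2 * max a b := by
    rw [two_mul]; exact add_le_add (le_max_left _ _) (le_max_right _ _)
  calc (a + b) ^ q ≤ (2 * max a b) ^ q := ENNReal.rpow_le_rpow h1 hq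
    _ = 2 ^ q * (max a b) ^ q := ENNReal.mul_rpow_of_nonneg _ _ hq
    _ ≤ 2 ^ q * (a ^ q + b ^ q) := by
        refine mul_le_mul_right ?_ _
        rcases le_total a b with h | h
        · rw [max_eq_right h]; exact le_add_self
        · rw [max_eq_left h]; exact self_le_add_right _ _

/-- If `ψ₁ ∈ L²(0,T)` is deterministic but `ψ₁ ∉ L^p(0,T-δ)` for every `p > 2`, then
`Y(t) = ∫_0^t ψ₁ dW + ψ₁(t)(T-t)` fails to be in `L^p` for every `p > 2`, although
`ψ(t) = ∫_0^T ψ₁ dW` belongs to every `L^p`, `p > 1`. Here `J a b` denotes the Wiener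
integral `∫_a^b ψ₁ dW`, which is Gaussian with mean `0` and variance `∫_a^b ψ₁²`. -/
theorem stmt_12 {Ω : Type*} {m0 : MeasurableSpace Ω} (μ : Measure Ω) [IsProbabilityMeasure μ]
    (T δ : ℝ) (hδ : 0 < δ) (hδT : δ < T)
    (ψ₁ : ℝ → ℝ) (hψ₁m : Measurable ψ₁)
    (hψ₁ : MemLp ψ₁ 2 (volume.restrict (Set.Ioc 0 T)))
    (hψ₁bad : ∀ p : ℝ, 2 < p →
      ¬ MemLp ψ₁ (ENNReal.ofReal p) (volume.restrict (Set.Ioc 0 (T - δ))))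
    (J : ℝ → ℝ → Ω → ℝ)
    (hJmeas : ∀ a b, Measurable (J a b))
    (hgauss : ∀ a b : ℝ, a ≤ b → Measure.map (J a b) μ
      = ProbabilityTheory.gaussianReal 0 ((∫ s in a..b, (ψ₁ s) ^ 2).toNNReal))
    (Y : ℝ → Ω → ℝ) (ψ : Ω → ℝ)
    (hY : ∀ t ω, Y t ω = J 0 t ω + ψ₁ t * (T - t))
    (hψ : ∀ ω, ψ ω = J 0 T ω) :
    (∀ p : ℝ, 2 < p →
      ∫⁻ t in Set.Ioc (0:ℝ) T, ∫⁻ ω, ENNReal.ofReal (|Y t ω| ^ p) ∂μ = ⊤) ∧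
    (∀ p : ℝ, 1 < p →
      ∫⁻ t in Set.Ioc (0:ℝ) T, ∫⁻ ω, ENNReal.ofReal (|ψ ω| ^ p) ∂μ < ⊤) := by
  have hT : (0:ℝ) < T := hδ.trans hδT
  constructor
  · intro p hp
    have hp0 : (0:ℝ) < p := by linarith
    by_contra hcon
    refine hψ₁bad p hp ?_
    have hfin : ∫⁻ t in Set.Ioc (0:ℝ) T, ∫⁻ ω, ENNReal.ofReal (|Y t ω| ^ p) ∂μ < ⊤ :=
      lt_top_iff_ne_top.mpr hcon
    set E : ℝ → ℝ≥0∞ := fun t => ∫⁻ ω, ENNReal.ofReal (|Y t ω| ^ p) ∂μ with hE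
    set M1 : ℝ≥0∞ := ∫⁻ x, ENNReal.ofReal (|x| ^ p) ∂(gaussianReal 0 1) with hM1
    have hM1top : M1 < ⊤ := gauss_moment_lt_top 1 hp0
    set vmax : ℝ≥0 := (∫ s in (0:ℝ)..T, ψ₁ s ^ 2).toNNReal with hvmax
    set K : ℝ≥0∞ := ENNReal.ofReal (√(vmax:ℝ) ^ p) * M1 with hK
    have hKtop : K < ⊤ := ENNReal.mul_lt_top ENNReal.ofReal_lt_top hM1top
    have hsq : IntegrableOn (fun s => ψ₁ s ^ 2) (Set.Ioc 0 T) volume := hψ₁.integrable_sq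
    have hvle : ∀ t ∈ Set.Ioc (0:ℝ) T, ((∫ s in (0:ℝ)..t, ψ₁ s ^ 2).toNNReal) ≤ vmax := by
      intro t ht
      refine Real.toNNReal_le_toNNReal ?_
      rw [intervalIntegral.integral_of_le ht.1.le, intervalIntegral.integral_of_le hT.le]
      exact setIntegral_mono_set hsq (ae_of_all _ fun s => sq_nonneg _)
        (HasSubset.Subset.eventuallyLE (Set.Ioc_subset_Ioc_right ht.2))
    have h2top : (2:ℝ≥0∞) ^ p ≠ ⊤ :=
      (ENNReal.rpow_lt_top_of_nonneg hp0.le ENNReal.ofNat_ne_top).ne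
    have key : ∀ t ∈ Set.Ioc (0:ℝ) T,
        ENNReal.ofReal (|ψ₁ t * (T - t)| ^ p) ≤ 2 ^ p * (E t + K) := by
      intro t ht
      have hJle : ∫⁻ ω, ENNReal.ofReal (|J 0 t ω| ^ p) ∂μ ≤ K := by
        calc ∫⁻ ω, ENNReal.ofReal (|J 0 t ω| ^ p) ∂μ
            = ∫⁻ x, ENNReal.ofReal (|x| ^ p) ∂(Measure.map (J 0 t) μ) :=
              (lintegral_map (measurable_absrpow p) (hJmeas 0 t)).symm
          _ = ∫⁻ x, ENNReal.ofReal (|x| ^ p)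
                ∂(gaussianReal 0 ((∫ s in (0:ℝ)..t, ψ₁ s ^ 2).toNNReal)) := by
              rw [hgauss 0 t ht.1.le]
          _ = ENNReal.ofReal (√(((∫ s in (0:ℝ)..t, ψ₁ s ^ 2).toNNReal : ℝ≥0) : ℝ) ^ p) * M1 :=
              gauss_moment_scale _ hp0.le
          _ ≤ K := by
              refine mul_le_mul_left (ENNReal.ofReal_le_ofReal ?_) _
              exact Real.rpow_le_rpow (Real.sqrt_nonneg _)
                (Real.sqrt_le_sqrt (by exact_mod_cast hvle t ht)) hp0.le
      have hmeasY : Measurable fun ω => ENNReal.ofReal (|Y t ω| ^ p) := by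
        have h : (fun ω => ENNReal.ofReal (|Y t ω| ^ p))
            = fun ω => ENNReal.ofReal (|J 0 t ω + ψ₁ t * (T - t)| ^ p) :=
          funext fun ω => by rw [hY]
        rw [h]
        exact (measurable_absrpow p).comp ((hJmeas 0 t).add_const _)
      have hptw : ∀ ω, ENNReal.ofReal (|ψ₁ t * (T - t)| ^ p)
          ≤ 2 ^ p * (ENNReal.ofReal (|Y t ω| ^ p) + ENNReal.ofReal (|J 0 t ω| ^ p)) := by
        intro ω
        have hd : ψ₁ t * (T - t) = Y t ω - J 0 t ω := by rw [hY]; ring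
        have h1 : |ψ₁ t * (T - t)| ≤ |Y t ω| + |J 0 t ω| := hd ▸ abs_sub _ _
        calc ENNReal.ofReal (|ψ₁ t * (T - t)| ^ p)
            ≤ ENNReal.ofReal ((|Y t ω| + |J 0 t ω|) ^ p) :=
              ENNReal.ofReal_le_ofReal (Real.rpow_le_rpow (abs_nonneg _) h1 hp0.le)
          _ = (ENNReal.ofReal |Y t ω| + ENNReal.ofReal |J 0 t ω|) ^ p := by
              rw [← ENNReal.ofReal_rpow_of_nonneg (by positivity) hp0.le,
                ENNReal.ofReal_add (abs_nonneg _) (abs_nonneg _)]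
          _ ≤ 2 ^ p * (ENNReal.ofReal |Y t ω| ^ p + ENNReal.ofReal |J 0 t ω| ^ p) :=
              add_rpow_le_two_rpow _ _ hp0.le
          _ = _ := by rw [ENNReal.ofReal_rpow_of_nonneg (abs_nonneg _) hp0.le,
                ENNReal.ofReal_rpow_of_nonneg (abs_nonneg _) hp0.le]
      calc ENNReal.ofReal (|ψ₁ t * (T - t)| ^ p)
          = ∫⁻ _ω, ENNReal.ofReal (|ψ₁ t * (T - t)| ^ p) ∂μ := by
            rw [lintegral_const, measure_univ, mul_one]
        _ ≤ ∫⁻ ω, 2 ^ p * (ENNReal.ofReal (|Y t ω| ^ p) + ENNReal.ofReal (|J 0 t ω| ^ p)) ∂μ :=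
            lintegral_mono hptw
        _ = 2 ^ p * (E t + ∫⁻ ω, ENNReal.ofReal (|J 0 t ω| ^ p) ∂μ) := by
            rw [lintegral_const_mul' _ _ h2top, lintegral_add_left hmeasY]
        _ ≤ 2 ^ p * (E t + K) := mul_le_mul_right (add_le_add_right hJle _) _
    have hsub : Set.Ioc (0:ℝ) (T - δ) ⊆ Set.Ioc 0 T := Set.Ioc_subset_Ioc_right (by linarith)
    have hstep : ∀ t : ℝ,
        (Set.Ioc (0:ℝ) (T - δ)).indicator (fun t => ENNReal.ofReal (|ψ₁ t| ^ p)) t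
        ≤ (Set.Ioc (0:ℝ) (T - δ)).indicator
            (fun t => ENNReal.ofReal (δ⁻¹ ^ p) * (2 ^ p * (E t + K))) t := by
      intro t
      by_cases ht : t ∈ Set.Ioc (0:ℝ) (T - δ)
      · rw [Set.indicator_of_mem ht, Set.indicator_of_mem ht]
        have hTt : δ ≤ T - t := by have := ht.2; linarith
        have h3 : |ψ₁ t| ≤ δ⁻¹ * |ψ₁ t * (T - t)| := by
          rw [abs_mul, abs_of_nonneg (by linarith : (0:ℝ) ≤ T - t)]
          have h4 : (1:ℝ) ≤ δ⁻¹ * (T - t) := by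
            rw [← inv_mul_cancel₀ hδ.ne']
            exact mul_le_mul_of_nonneg_left hTt (inv_nonneg.mpr hδ.le)
          calc |ψ₁ t| = |ψ₁ t| * 1 := (mul_one _).symm
            _ ≤ |ψ₁ t| * (δ⁻¹ * (T - t)) := mul_le_mul_of_nonneg_left h4 (abs_nonneg _)
            _ = δ⁻¹ * (|ψ₁ t| * (T - t)) := by ring
        calc ENNReal.ofReal (|ψ₁ t| ^ p)
            ≤ ENNReal.ofReal ((δ⁻¹ * |ψ₁ t * (T - t)|) ^ p) :=
              ENNReal.ofReal_le_ofReal (Real.rpow_le_rpow (abs_nonneg _) h3 hp0.le)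
          _ = ENNReal.ofReal (δ⁻¹ ^ p) * ENNReal.ofReal (|ψ₁ t * (T - t)| ^ p) := by
              rw [Real.mul_rpow (inv_nonneg.mpr hδ.le) (abs_nonneg _),
                ENNReal.ofReal_mul (Real.rpow_nonneg (inv_nonneg.mpr hδ.le) p)]
          _ ≤ _ := mul_le_mul_right (key t (hsub ht)) _
      · rw [Set.indicator_of_notMem ht, Set.indicator_of_notMem ht]
    have hmain : ∫⁻ t in Set.Ioc (0:ℝ) (T - δ), ENNReal.ofReal (|ψ₁ t| ^ p) < ⊤ := by
      calc ∫⁻ t in Set.Ioc (0:ℝ) (T - δ), ENNReal.ofReal (|ψ₁ t| ^ p)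
          = ∫⁻ t, (Set.Ioc (0:ℝ) (T - δ)).indicator
              (fun t => ENNReal.ofReal (|ψ₁ t| ^ p)) t :=
            (lintegral_indicator measurableSet_Ioc _).symm
        _ ≤ ∫⁻ t, (Set.Ioc (0:ℝ) (T - δ)).indicator
              (fun t => ENNReal.ofReal (δ⁻¹ ^ p) * (2 ^ p * (E t + K))) t :=
            lintegral_mono hstep
        _ = ∫⁻ t in Set.Ioc (0:ℝ) (T - δ), ENNReal.ofReal (δ⁻¹ ^ p) * (2 ^ p * (E t + K)) :=
            lintegral_indicator measurableSet_Ioc _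
        _ = ENNReal.ofReal (δ⁻¹ ^ p) * (2 ^ p * ((∫⁻ t in Set.Ioc (0:ℝ) (T - δ), E t)
              + K * volume (Set.Ioc (0:ℝ) (T - δ)))) := by
            rw [lintegral_const_mul' _ _ ENNReal.ofReal_ne_top, lintegral_const_mul' _ _ h2top,
              lintegral_add_right _ measurable_const, setLIntegral_const]
        _ < ⊤ := by
            have h1 : ∫⁻ t in Set.Ioc (0:ℝ) (T - δ), E t ≤ ∫⁻ t in Set.Ioc (0:ℝ) T, E t :=
              lintegral_mono' (Measure.restrict_mono hsub le_rfl) le_rfl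
            have h2 : K * volume (Set.Ioc (0:ℝ) (T - δ)) < ⊤ :=
              ENNReal.mul_lt_top hKtop (by rw [Real.volume_Ioc]; exact ENNReal.ofReal_lt_top)
            exact ENNReal.mul_lt_top ENNReal.ofReal_lt_top
              (ENNReal.mul_lt_top (ENNReal.rpow_lt_top_of_nonneg hp0.le ENNReal.ofNat_ne_top)
                (ENNReal.add_lt_top.mpr ⟨lt_of_le_of_lt h1 hfin, h2⟩))
    refine ⟨hψ₁m.aestronglyMeasurable, ?_⟩
    have hpt : (ENNReal.ofReal p).toReal = p := ENNReal.toReal_ofReal hp0.le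
    rw [eLpNorm_eq_lintegral_rpow_enorm_toReal (by simpa [ENNReal.ofReal_eq_zero] using hp0.not_ge)
      ENNReal.ofReal_ne_top, hpt]
    refine ENNReal.rpow_lt_top_of_nonneg (by positivity) (ne_of_lt ?_)
    have hcg : ∀ x : ℝ, ‖ψ₁ x‖ₑ ^ p = ENNReal.ofReal (|ψ₁ x| ^ p) := fun x => by
      rw [← ofReal_norm, Real.norm_eq_abs,
        ENNReal.ofReal_rpow_of_nonneg (abs_nonneg _) hp0.le]
    rw [lintegral_congr fun x => hcg x]
    exact hmain
  · intro p hp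
    have hp0 : (0:ℝ) < p := by linarith
    have hC : ∫⁻ ω, ENNReal.ofReal (|ψ ω| ^ p) ∂μ < ⊤ := by
      have heq : (fun ω => ENNReal.ofReal (|ψ ω| ^ p))
          = fun ω => ENNReal.ofReal (|J 0 T ω| ^ p) := funext fun ω => by rw [hψ]
      rw [heq, ← lintegral_map (measurable_absrpow p) (hJmeas 0 T), hgauss 0 T hT.le]
      exact gauss_moment_lt_top _ hp0
    rw [setLIntegral_const]
    exact ENNReal.mul_lt_top hC (by rw [Real.volume_Ioc]; exact ENNReal.ofReal_lt_top)
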